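/- arXiv:2304.09281 — 2 statements merged into one kernel-verified Lean document; each statement's English description precedes it below -/
import Mathlib

section
/- Let M be a d×d symmetric PSD matrix with ‖M‖_F ≤ 1, let S be an ℓ-dimensional subspace of ℝ^d on which x^T M x ≥ λ_ℓ(M)‖x‖² (guaranteed by Courant–Fischer using the top ℓ eigenvectors), and let G be a linear map such that ‖G M^{1/2} x‖² ≥ (1 − ε/λ_ℓ(M))‖M^{1/2} x‖² for all x ∈ S, where 0 < ε < λ_ℓ(M). Then λ_ℓ(M^{1/2} G^T G M^{1/2}) ≥ λ_ℓ(M) − ε. -/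
open Matrix

/-- The `i`-th largest eigenvalue (0-indexed) of a Hermitian matrix. -/
noncomputable def sortedEig {n : ℕ} {A : Matrix (Fin n) (Fin n) ℝ}
    (hA : A.IsHermitian) (i : Fin n) : ℝ :=
  (hA.eigenvalues ∘ Tuple.sort hA.eigenvalues) i.rev

lemma cf_lower {d : ℕ} {N : Matrix (Fin d) (Fin d) ℝ} (hN : N.IsHermitian) (c : ℝ)
    (ℓ : Fin d) (S : Submodule ℝ (Fin d → ℝ)) (hdim : Module.finrank ℝ S = (ℓ : ℕ) + 1)
    (h : ∀ x ∈ S, c * (x ⬝ᵥ x) ≤ x ⬝ᵥ N.mulVec x) :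
    c ≤ sortedEig hN ℓ := by
  classical
  set σ := Tuple.sort hN.eigenvalues with hσ
  set b := hN.eigenvectorBasis with hb
  set E := WithLp.equiv 2 (Fin d → ℝ) with hE
  -- dot product as inner product
  have hdot : ∀ y z : Fin d → ℝ, y ⬝ᵥ z = (inner ℝ (E.symm y) (E.symm z) : ℝ) := by
    intro y z
    simp [PiLp.inner_apply, RCLike.inner_apply, dotProduct, mul_comm, hE]
  -- Parseval
  have hpar : ∀ u w : EuclideanSpace ℝ (Fin d),
      (inner ℝ u w : ℝ) = ∑ i, b.repr u i * b.repr w i := by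
    intro u w
    rw [← b.sum_inner_mul_inner u w]
    refine Finset.sum_congr rfl fun i _ => ?_
    rw [b.repr_apply_apply, b.repr_apply_apply, real_inner_comm u (b i)]
  have hNT : Nᵀ = N := by simpa using hN.eq
  -- eigencoefficients
  have hcoef : ∀ (x : Fin d → ℝ) (i : Fin d),
      b.repr (E.symm (N *ᵥ x)) i = hN.eigenvalues i * b.repr (E.symm x) i := by
    intro x i
    have e1 : b.repr (E.symm (N *ᵥ x)) i = (E (b i)) ⬝ᵥ (N *ᵥ x) := by
      rw [b.repr_apply_apply, hdot]; simp
    have e2 : b.repr (E.symm x) i = (E (b i)) ⬝ᵥ x := by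
      rw [b.repr_apply_apply, hdot]; simp
    rw [e1, e2, dotProduct_mulVec]
    have hv : E (b i) ᵥ* N = hN.eigenvalues i • E (b i) := by
      conv_lhs => rw [← hNT]
      rw [vecMul_transpose]
      exact hN.mulVec_eigenvectorBasis i
    rw [hv, smul_dotProduct, smul_eq_mul]
  have hqf : ∀ x : Fin d → ℝ,
      x ⬝ᵥ N *ᵥ x = ∑ i, hN.eigenvalues i * (b.repr (E.symm x) i) ^ 2 := by
    intro x
    rw [hdot, hpar]
    refine Finset.sum_congr rfl fun i _ => ?_
    rw [hcoef]; ring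
  have hnorm : ∀ x : Fin d → ℝ, x ⬝ᵥ x = ∑ i, (b.repr (E.symm x) i) ^ 2 := by
    intro x
    rw [hdot, hpar]
    exact Finset.sum_congr rfl fun i _ => (sq _).symm
  -- the coefficient-projection map
  let φ : S →ₗ[ℝ] ({j : Fin d // ℓ.rev < j} → ℝ) :=
    { toFun := fun x j => b.repr (E.symm x.1) (σ j.1)
      map_add' := by
        intro x y; ext j
        have hadd : E.symm ((x : Fin d → ℝ) + y) = E.symm x + E.symm y := rfl
        simp only [Submodule.coe_add, hadd, map_add]; rfl
      map_smul' := by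
        intro a x; ext j
        have hsmul : E.symm (a • (x : Fin d → ℝ)) = a • E.symm x := rfl
        simp only [Submodule.coe_smul, hsmul, _root_.map_smul]; rfl }
  have hcard : Fintype.card {j : Fin d // ℓ.rev < j} = (ℓ : ℕ) := by
    rw [Fintype.card_subtype]
    have := Fin.card_Ioi ℓ.rev
    have h1 : (Finset.filter (fun j => ℓ.rev < j) Finset.univ) = Finset.Ioi ℓ.rev := by
      ext j; simp
    rw [h1, Fin.card_Ioi, Fin.val_rev]
    omega
  have hker : 0 < Module.finrank ℝ (LinearMap.ker φ) := by
    have h1 := LinearMap.finrank_range_add_finrank_ker φ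
    have h2 : Module.finrank ℝ (LinearMap.range φ) ≤ (ℓ : ℕ) := by
      calc Module.finrank ℝ (LinearMap.range φ)
          ≤ Module.finrank ℝ ({j : Fin d // ℓ.rev < j} → ℝ) := Submodule.finrank_le _
        _ = (ℓ : ℕ) := by rw [Module.finrank_fintype_fun_eq_card, hcard]
    omega
  haveI : Nontrivial (LinearMap.ker φ) := Module.nontrivial_of_finrank_pos hker
  obtain ⟨y, hy0⟩ := exists_ne (0 : LinearMap.ker φ)
  set x : Fin d → ℝ := (y.1 : Fin d → ℝ) with hx
  have hxS : x ∈ S := y.1.2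
  have hxne : x ≠ 0 := by
    intro h0
    apply hy0
    ext i
    simpa [hx] using congrFun h0 i
  set r : Fin d → ℝ := fun i => b.repr (E.symm x) i with hr
  have hzero : ∀ j : Fin d, ℓ.rev < j → r (σ j) = 0 := by
    intro j hj
    have := y.2
    rw [LinearMap.mem_ker] at this
    exact congrFun this ⟨j, hj⟩
  have hL : sortedEig hN ℓ = hN.eigenvalues (σ ℓ.rev) := rfl
  have hbound : x ⬝ᵥ N *ᵥ x ≤ sortedEig hN ℓ * (x ⬝ᵥ x) := by
    rw [hqf, hnorm]
    rw [← Equiv.sum_comp σ (fun i => hN.eigenvalues i * (b.repr (E.symm x) i) ^ 2),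
        ← Equiv.sum_comp σ (fun i => (b.repr (E.symm x) i) ^ 2), Finset.mul_sum]
    refine Finset.sum_le_sum fun j _ => ?_
    rcases le_or_gt j ℓ.rev with hj | hj
    · refine mul_le_mul_of_nonneg_right ?_ (sq_nonneg _)
      rw [hL]
      exact Tuple.monotone_sort hN.eigenvalues hj
    · have := hzero j hj
      simp only [hr] at this
      rw [this]
      simp
  have hq : 0 < x ⬝ᵥ x := by
    have h0 : x ⬝ᵥ x ≠ 0 := fun hc => hxne (dotProduct_self_eq_zero.mp hc)
    have h1 : 0 ≤ x ⬝ᵥ x := Finset.sum_nonneg fun i _ => mul_self_nonneg _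
    exact lt_of_le_of_ne h1 (Ne.symm h0)
  have := le_trans (h x hxS) hbound
  exact le_of_mul_le_mul_right this hq

/-- Let `M` be `d×d` symmetric PSD with `‖M‖_F ≤ 1` and PSD square root `R`,
let `S` be an `(ℓ+1)`-dimensional subspace of `ℝ^d` (0-indexed `ℓ`) on which
`xᵀ M x ≥ λ_ℓ(M) ‖x‖²`, and let `G` satisfy `‖G M^{1/2} x‖² ≥ (1 − ε/λ_ℓ(M)) ‖M^{1/2} x‖²`
for all `x ∈ S`, where `0 < ε < λ_ℓ(M)`. Then
`λ_ℓ(M^{1/2} Gᵀ G M^{1/2}) ≥ λ_ℓ(M) − ε`. -/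
theorem stmt_5 {d k : ℕ} (M R : Matrix (Fin d) (Fin d) ℝ)
    (hM : M.PosSemidef) (hR : R.PosSemidef) (hRR : R * R = M)
    (hF : ∑ i, ∑ j, (M i j) ^ 2 ≤ 1)
    (ℓ : Fin d) (S : Submodule ℝ (Fin d → ℝ))
    (hdim : Module.finrank ℝ S = (ℓ : ℕ) + 1)
    (hS : ∀ x ∈ S, sortedEig hM.1 ℓ * (x ⬝ᵥ x) ≤ x ⬝ᵥ M.mulVec x)
    (G : Matrix (Fin k) (Fin d) ℝ) (ε : ℝ) (hε : 0 < ε) (hεlt : ε < sortedEig hM.1 ℓ)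
    (hG : ∀ x ∈ S,
      (1 - ε / sortedEig hM.1 ℓ) * (R.mulVec x ⬝ᵥ R.mulVec x)
        ≤ (G * R).mulVec x ⬝ᵥ (G * R).mulVec x)
    (h2 : (R * Gᵀ * G * R).IsHermitian) :
    sortedEig hM.1 ℓ - ε ≤ sortedEig h2 ℓ := by
  set lam := sortedEig hM.1 ℓ with hlam
  have hlampos : 0 < lam := lt_trans hε hεlt
  have hRT : Rᵀ = R := by simpa using hR.1.eq
  refine cf_lower h2 (lam - ε) ℓ S hdim ?_
  intro x hx
  have hRM : R *ᵥ x ⬝ᵥ R *ᵥ x = x ⬝ᵥ M *ᵥ x := by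
    rw [dotProduct_mulVec (R *ᵥ x) R x]
    have e1 : (R *ᵥ x) ᵥ* R = M *ᵥ x := by
      rw [← mulVec_transpose, hRT, mulVec_mulVec, hRR]
    rw [e1, dotProduct_comm]
  have hGR : R * Gᵀ * G * R = (G * R)ᵀ * (G * R) := by
    rw [transpose_mul, hRT]
    exact Matrix.mul_assoc _ _ _
  have e2 : x ⬝ᵥ (R * Gᵀ * G * R) *ᵥ x = (G * R) *ᵥ x ⬝ᵥ (G * R) *ᵥ x := by
    rw [hGR, ← mulVec_mulVec, dotProduct_mulVec, vecMul_transpose]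
  have hnn : 0 ≤ 1 - ε / lam := by
    rw [sub_nonneg]
    exact (div_le_one hlampos).mpr (le_of_lt hεlt)
  have key : (1 - ε / lam) * lam = lam - ε := by field_simp
  calc (lam - ε) * (x ⬝ᵥ x) = (1 - ε / lam) * (lam * (x ⬝ᵥ x)) := by
        rw [← mul_assoc, key]
    _ ≤ (1 - ε / lam) * (x ⬝ᵥ M *ᵥ x) := mul_le_mul_of_nonneg_left (hS x hx) hnn
    _ = (1 - ε / lam) * (R *ᵥ x ⬝ᵥ R *ᵥ x) := by rw [hRM]
    _ ≤ (G * R) *ᵥ x ⬝ᵥ (G * R) *ᵥ x := hG x hx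
    _ = x ⬝ᵥ (R * Gᵀ * G * R) *ᵥ x := e2.symm
end

section
/- Let x = x₁ + x₂ with x₁ ⊥ x₂ be a unit vector, and let B₁, B₂ be matrices with disjoint row supports matching x₁, x₂ respectively (so B₁ x₂ = 0 and B₂ x₁ = 0). If ‖B₁^T B₁‖ ≤ α, ‖B₂^T B₂‖ ≤ β, and ‖B₁^T B₂‖ ≤ γ, then x^T (B₁ + B₂)^T (B₁ + B₂) x ≤ α‖x₁‖² + β‖x₂‖² + 2γ‖x₁‖‖x₂‖, which is bounded by the largest eigenvalue of the 2×2 matrix [[α, γ],[γ, β]]. -/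
open Matrix RealInnerProductSpace

lemma dot_mulVec_le_aux {d : ℕ} (A : Matrix (Fin d) (Fin d) ℝ) (x y : Fin d → ℝ) :
    x ⬝ᵥ A *ᵥ y ≤ ‖Matrix.toEuclideanCLM (𝕜 := ℝ) (n := Fin d) A‖ *
      Real.sqrt (x ⬝ᵥ x) * Real.sqrt (y ⬝ᵥ y) := by
  set T := Matrix.toEuclideanCLM (𝕜 := ℝ) (n := Fin d) A with hT
  set x' : EuclideanSpace ℝ (Fin d) := (WithLp.equiv 2 _).symm x with hx'
  set y' : EuclideanSpace ℝ (Fin d) := (WithLp.equiv 2 _).symm y with hy'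
  have h1 : x ⬝ᵥ A *ᵥ y = ⟪x', T y'⟫ := by
    rw [hT, inner_toEuclideanCLM]
    rfl
  have hxn : ‖x'‖ = Real.sqrt (x ⬝ᵥ x) := by
    rw [EuclideanSpace.norm_eq]
    congr 1
    simp [dotProduct, hx', Real.norm_eq_abs, sq_abs, sq]
  have hyn : ‖y'‖ = Real.sqrt (y ⬝ᵥ y) := by
    rw [EuclideanSpace.norm_eq]
    congr 1
    simp [dotProduct, hy', Real.norm_eq_abs, sq_abs, sq]
  calc x ⬝ᵥ A *ᵥ y = ⟪x', T y'⟫ := h1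
    _ ≤ ‖x'‖ * ‖T y'‖ := real_inner_le_norm _ _
    _ ≤ ‖x'‖ * (‖T‖ * ‖y'‖) :=
        mul_le_mul_of_nonneg_left (T.le_opNorm y') (norm_nonneg _)
    _ = ‖T‖ * Real.sqrt (x ⬝ᵥ x) * Real.sqrt (y ⬝ᵥ y) := by rw [hxn, hyn]; ring

lemma quad_le_eig {m : Type*} [Fintype m] [DecidableEq m] {M : Matrix m m ℝ}
    (hM : M.IsHermitian) (c : ℝ) (hc : ∀ i, hM.eigenvalues i ≤ c) (v : m → ℝ) :
    v ⬝ᵥ M *ᵥ v ≤ c * (v ⬝ᵥ v) := by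
  set U : Matrix m m ℝ := (Matrix.IsHermitian.eigenvectorUnitary hM : Matrix m m ℝ) with hU
  have hUU : U * star U = 1 := (Matrix.mem_unitaryGroup_iff).mp
    (Matrix.IsHermitian.eigenvectorUnitary hM).2
  set w : m → ℝ := star U *ᵥ v with hw
  have hsU : star U = Uᵀ := by
    rw [Matrix.star_eq_conjTranspose, Matrix.conjTranspose_eq_transpose_of_trivial]
  have hw' : v ᵥ* U = w := by rw [hw, hsU, Matrix.mulVec_transpose]
  have key : ∀ (f : m → ℝ), v ⬝ᵥ (U * Matrix.diagonal f * star U) *ᵥ v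
      = ∑ i, f i * (w i * w i) := by
    intro f
    rw [← Matrix.mulVec_mulVec, ← Matrix.mulVec_mulVec, Matrix.dotProduct_mulVec, hw', ← hw]
    simp only [dotProduct, Matrix.mulVec_diagonal]
    exact Finset.sum_congr rfl fun i _ => by ring
  have hvv : v ⬝ᵥ v = ∑ i, w i * w i := by
    have h0 : v ⬝ᵥ v = v ⬝ᵥ (U * Matrix.diagonal (fun _ => (1:ℝ)) * star U) *ᵥ v := by
      simp [Matrix.diagonal_one, hUU]
    rw [h0, key]
    simp
  have hM' : M = U * Matrix.diagonal hM.eigenvalues * star U := by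
    convert hM.spectral_theorem using 3
    rfl
  calc v ⬝ᵥ M *ᵥ v = ∑ i, hM.eigenvalues i * (w i * w i) := by
        conv_lhs => rw [hM']
        exact key _
    _ ≤ ∑ i, c * (w i * w i) :=
        Finset.sum_le_sum fun i _ => mul_le_mul_of_nonneg_right (hc i) (mul_self_nonneg _)
    _ = c * (v ⬝ᵥ v) := by rw [hvv, Finset.mul_sum]

/-- Let `x = x₁ + x₂` with `x₁ ⊥ x₂` be a unit vector, and let `B₁, B₂` have
disjoint row supports matching `x₁, x₂` (so `B₁ x₂ = 0`, `B₂ x₁ = 0`). If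
`‖B₁ᵀ B₁‖ ≤ α`, `‖B₂ᵀ B₂‖ ≤ β`, `‖B₁ᵀ B₂‖ ≤ γ` (operator norms), then
`xᵀ (B₁+B₂)ᵀ (B₁+B₂) x ≤ α‖x₁‖² + β‖x₂‖² + 2γ‖x₁‖‖x₂‖`, which is in turn bounded by the
largest eigenvalue of the 2×2 matrix `[[α, γ], [γ, β]]`. -/
theorem stmt_18 {n d : ℕ} (x₁ x₂ : Fin d → ℝ) (horth : x₁ ⬝ᵥ x₂ = 0)
    (hunit : (x₁ + x₂) ⬝ᵥ (x₁ + x₂) = 1)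
    (B₁ B₂ : Matrix (Fin n) (Fin d) ℝ)
    (h₁ : B₁.mulVec x₂ = 0) (h₂ : B₂.mulVec x₁ = 0)
    (α β γ : ℝ)
    (hα : ‖Matrix.toEuclideanCLM (𝕜 := ℝ) (n := Fin d) (B₁ᵀ * B₁)‖ ≤ α)
    (hβ : ‖Matrix.toEuclideanCLM (𝕜 := ℝ) (n := Fin d) (B₂ᵀ * B₂)‖ ≤ β)
    (hγ : ‖Matrix.toEuclideanCLM (𝕜 := ℝ) (n := Fin d) (B₁ᵀ * B₂)‖ ≤ γ)
    (h2x2 : (!![α, γ; γ, β]).IsHermitian) :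
    (x₁ + x₂) ⬝ᵥ ((B₁ + B₂)ᵀ * (B₁ + B₂)).mulVec (x₁ + x₂)
        ≤ α * (x₁ ⬝ᵥ x₁) + β * (x₂ ⬝ᵥ x₂) +
          2 * γ * Real.sqrt (x₁ ⬝ᵥ x₁) * Real.sqrt (x₂ ⬝ᵥ x₂) ∧
    α * (x₁ ⬝ᵥ x₁) + β * (x₂ ⬝ᵥ x₂) +
          2 * γ * Real.sqrt (x₁ ⬝ᵥ x₁) * Real.sqrt (x₂ ⬝ᵥ x₂)
        ≤ max (h2x2.eigenvalues 0) (h2x2.eigenvalues 1) := by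
  have h1nn : (0:ℝ) ≤ x₁ ⬝ᵥ x₁ :=
    Finset.sum_nonneg fun i _ => mul_self_nonneg _
  have h2nn : (0:ℝ) ≤ x₂ ⬝ᵥ x₂ :=
    Finset.sum_nonneg fun i _ => mul_self_nonneg _
  set a := Real.sqrt (x₁ ⬝ᵥ x₁) with ha
  set b := Real.sqrt (x₂ ⬝ᵥ x₂) with hb
  have ha2 : a * a = x₁ ⬝ᵥ x₁ := Real.mul_self_sqrt h1nn
  have hb2 : b * b = x₂ ⬝ᵥ x₂ := Real.mul_self_sqrt h2nn
  constructor
  · -- part 1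
    have hexp : (x₁ + x₂) ⬝ᵥ ((B₁ + B₂)ᵀ * (B₁ + B₂)).mulVec (x₁ + x₂)
        = x₁ ⬝ᵥ (B₁ᵀ * B₁) *ᵥ x₁ + x₂ ⬝ᵥ (B₂ᵀ * B₂) *ᵥ x₂
          + 2 * (x₁ ⬝ᵥ (B₁ᵀ * B₂) *ᵥ x₂) := by
      have hv : (B₁ + B₂) *ᵥ (x₁ + x₂) = B₁ *ᵥ x₁ + B₂ *ᵥ x₂ := by
        rw [Matrix.add_mulVec, Matrix.mulVec_add, Matrix.mulVec_add, h₁, h₂]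
        abel
      have habs : ∀ (C D : Matrix (Fin n) (Fin d) ℝ) (u v : Fin d → ℝ),
          u ⬝ᵥ (Cᵀ * D) *ᵥ v = (C *ᵥ u) ⬝ᵥ (D *ᵥ v) := by
        intro C D u v
        rw [← Matrix.mulVec_mulVec, Matrix.dotProduct_mulVec, Matrix.vecMul_transpose]
      rw [← Matrix.mulVec_mulVec, Matrix.dotProduct_mulVec, Matrix.vecMul_transpose, hv,
        add_dotProduct, dotProduct_add, dotProduct_add,
        habs, habs, habs]
      have hcomm : (B₂ *ᵥ x₂) ⬝ᵥ (B₁ *ᵥ x₁) = (B₁ *ᵥ x₁) ⬝ᵥ (B₂ *ᵥ x₂) :=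
        dotProduct_comm _ _
      rw [hcomm]
      ring
    rw [hexp]
    have e1 : x₁ ⬝ᵥ (B₁ᵀ * B₁) *ᵥ x₁ ≤ α * (x₁ ⬝ᵥ x₁) := by
      calc x₁ ⬝ᵥ (B₁ᵀ * B₁) *ᵥ x₁ ≤ _ * a * a := dot_mulVec_le_aux _ _ _
        _ ≤ α * a * a := by
            have := Real.sqrt_nonneg (x₁ ⬝ᵥ x₁)
            nlinarith
        _ = α * (x₁ ⬝ᵥ x₁) := by rw [mul_assoc, ha2]
    have e2 : x₂ ⬝ᵥ (B₂ᵀ * B₂) *ᵥ x₂ ≤ β * (x₂ ⬝ᵥ x₂) := by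
      calc x₂ ⬝ᵥ (B₂ᵀ * B₂) *ᵥ x₂ ≤ _ * b * b := dot_mulVec_le_aux _ _ _
        _ ≤ β * b * b := by
            have := Real.sqrt_nonneg (x₂ ⬝ᵥ x₂)
            nlinarith
        _ = β * (x₂ ⬝ᵥ x₂) := by rw [mul_assoc, hb2]
    have e3 : x₁ ⬝ᵥ (B₁ᵀ * B₂) *ᵥ x₂ ≤ γ * a * b := by
      calc x₁ ⬝ᵥ (B₁ᵀ * B₂) *ᵥ x₂ ≤ _ * a * b := dot_mulVec_le_aux _ _ _
        _ ≤ γ * a * b := by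
            have h1 := Real.sqrt_nonneg (x₁ ⬝ᵥ x₁)
            have h2 := Real.sqrt_nonneg (x₂ ⬝ᵥ x₂)
            have hab0 : 0 ≤ a * b := mul_nonneg h1 h2
            nlinarith [hγ, hab0, mul_le_mul_of_nonneg_right hγ hab0]
    nlinarith [e1, e2, e3]
  · -- part 2
    have hab : a * a + b * b = 1 := by
      rw [ha2, hb2]
      have : (x₁ + x₂) ⬝ᵥ (x₁ + x₂)
          = x₁ ⬝ᵥ x₁ + x₂ ⬝ᵥ x₂ + (x₁ ⬝ᵥ x₂ + x₂ ⬝ᵥ x₁) := by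
        rw [add_dotProduct, dotProduct_add, dotProduct_add]
        ring
      have hc : x₂ ⬝ᵥ x₁ = 0 := by rw [dotProduct_comm]; exact horth
      rw [this, horth, hc] at hunit
      linarith
    set c := max (h2x2.eigenvalues 0) (h2x2.eigenvalues 1) with hcdef
    have hc : ∀ i, h2x2.eigenvalues i ≤ c := by
      intro i
      fin_cases i
      · exact le_max_left _ _
      · exact le_max_right _ _
    have := quad_le_eig h2x2 c hc ![a, b]
    have hquad : (![a, b] : Fin 2 → ℝ) ⬝ᵥ (!![α, γ; γ, β]) *ᵥ ![a, b]
        = α * (a * a) + β * (b * b) + 2 * γ * a * b := by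
      simp [dotProduct, Matrix.mulVec, Fin.sum_univ_two]
      ring
    have hvv : (![a, b] : Fin 2 → ℝ) ⬝ᵥ ![a, b] = 1 := by
      simp [dotProduct, Fin.sum_univ_two]
      linarith [hab]
    rw [hquad, hvv, mul_one] at this
    rw [ha2, hb2] at this
    linarith
end
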